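/- Let p0 be a differentiable probability density on ℝ and pw a twice differentiable probability density on ℝ. Assume: (A1) p0(x)·(log pw)'(x) → 0 as x → ±∞; (A2) ∫ p0(x)((log p0)'(x))² dx < ∞ and ∫ p0(x)((log pw)'(x))² dx < ∞; (A3) ∫ p0(x)|(log pw)''(x)| dx < ∞. Then D_F(p0‖pw) = ∫ p0(x)[ (1/2)((log pw)'(x))² + (log pw)''(x) ] dx + C, where C = (1/2)∫ p0(x)((log p0)'(x))² dx does not depend on pw. -/

import Mathlib

open MeasureTheory Filter

theorem explicit_fisher_divergence_real_line
    (p0 pw : ℝ → ℝ)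
    (hp0pos : ∀ x, 0 < p0 x) (hpwpos : ∀ x, 0 < pw x)
    (hp0diff : Differentiable ℝ p0) (hpwdiff : ContDiff ℝ 2 pw)
    (hp0int : ∫ x, p0 x = 1) (hpwint : ∫ x, pw x = 1)
    (hA1top : Tendsto (fun x => p0 x * deriv (fun y => Real.log (pw y)) x) atTop (nhds 0))
    (hA1bot : Tendsto (fun x => p0 x * deriv (fun y => Real.log (pw y)) x) atBot (nhds 0))
    (hA2a : Integrable (fun x => p0 x * (deriv (fun y => Real.log (p0 y)) x)^2))
    (hA2b : Integrable (fun x => p0 x * (deriv (fun y => Real.log (pw y)) x)^2))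
    (hA3 : Integrable (fun x => p0 x * |deriv (deriv (fun y => Real.log (pw y))) x|)) :
    (1/2) * (∫ x, p0 x * (deriv (fun y => Real.log (p0 y)) x
        - deriv (fun y => Real.log (pw y)) x)^2)
      = (∫ x, p0 x * ((1/2) * (deriv (fun y => Real.log (pw y)) x)^2
            + deriv (deriv (fun y => Real.log (pw y))) x))
        + (1/2) * (∫ x, p0 x * (deriv (fun y => Real.log (p0 y)) x)^2) := by
  set u : ℝ → ℝ := deriv (fun y => Real.log (p0 y)) with hu_def
  set ψ : ℝ → ℝ := deriv (fun y => Real.log (pw y)) with hψ_def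
  set φ : ℝ → ℝ := deriv ψ with hφ_def
  have hpwd : Differentiable ℝ pw := hpwdiff.differentiable (by norm_num)
  -- u x = p0' x / p0 x
  have hu : ∀ x, u x = deriv p0 x / p0 x := fun x =>
    ((hp0diff x).hasDerivAt.log (hp0pos x).ne').deriv
  have hp0u : ∀ x, p0 x * u x = deriv p0 x := by
    intro x; rw [hu x, mul_comm, div_mul_cancel₀ _ (hp0pos x).ne']
  -- ψ x = pw' x / pw x
  have hψ : ∀ x, ψ x = deriv pw x / pw x := fun x =>
    ((hpwd x).hasDerivAt.log (hpwpos x).ne').deriv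
  -- ψ is differentiable, with continuous derivative φ
  have hpw2 : ContDiff ℝ ((1:ℕ∞) + 1) pw := by convert hpwdiff using 2; rfl
  have hdpw : ContDiff ℝ 1 (deriv pw) := (contDiff_succ_iff_deriv.mp hpw2).2.2
  have hψeq : ψ = fun x => deriv pw x / pw x := funext hψ
  have hψdiff : Differentiable ℝ ψ := by
    rw [hψeq]
    exact (hdpw.differentiable one_ne_zero).div hpwd (fun x => (hpwpos x).ne')
  have hψcont : Continuous ψ := hψdiff.continuous
  have hψd : ∀ x, HasDerivAt ψ (φ x) x := fun x => (hψdiff x).hasDerivAt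
  -- integrability of p0 * φ
  have hmφ : AEStronglyMeasurable (fun x => p0 x * φ x) volume := by
    exact (hp0diff.continuous.aestronglyMeasurable).mul
      ((measurable_deriv ψ).aestronglyMeasurable)
  have hint1 : Integrable (fun x => p0 x * φ x) := by
    refine Integrable.mono' hA3 hmφ ?_
    filter_upwards with x
    rw [Real.norm_eq_abs, abs_mul, abs_of_nonneg (hp0pos x).le]
  -- integrability of p0' * ψ = p0 * u * ψ
  have hmu : AEStronglyMeasurable (fun x => deriv p0 x * ψ x) volume :=
    (measurable_deriv p0).aestronglyMeasurable.mul hψcont.aestronglyMeasurable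
  have hint2 : Integrable (fun x => deriv p0 x * ψ x) := by
    refine Integrable.mono' ((hA2a.add hA2b).const_mul (1/2)) hmu ?_
    filter_upwards with x
    rw [← hp0u x]
    have h1 : |p0 x * u x * ψ x| = p0 x * (|u x| * |ψ x|) := by
      rw [abs_mul, abs_mul, abs_of_nonneg (hp0pos x).le, mul_assoc]
    rw [Real.norm_eq_abs, h1]
    have h2 : |u x| * |ψ x| ≤ (1/2) * ((u x)^2 + (ψ x)^2) := by
      nlinarith [sq_nonneg (|u x| - |ψ x|), sq_abs (u x), sq_abs (ψ x)]
    calc p0 x * (|u x| * |ψ x|) ≤ p0 x * ((1/2) * ((u x)^2 + (ψ x)^2)) :=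
          mul_le_mul_of_nonneg_left h2 (hp0pos x).le
      _ = (1/2) * (p0 x * (u x)^2 + p0 x * (ψ x)^2) := by ring
  -- integration by parts
  have key : ∫ x, p0 x * φ x = -∫ x, deriv p0 x * ψ x := by
    have := integral_mul_deriv_eq_deriv_mul (u := p0) (v := ψ) (u' := deriv p0) (v' := φ)
      (fun x _ => (hp0diff x).hasDerivAt) (fun x _ => hψd x) hint1 hint2 hA1bot hA1top
    simpa using this
  -- integrability of p0 * u * ψ
  have hint2' : Integrable (fun x => p0 x * u x * ψ x) := by
    refine hint2.congr ?_
    filter_upwards with x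
    rw [hp0u x]
  -- expand the square
  have hexp : (∫ x, p0 x * (u x - ψ x)^2)
      = (∫ x, p0 x * (u x)^2) - 2 * (∫ x, p0 x * u x * ψ x) + (∫ x, p0 x * (ψ x)^2) := by
    have : (fun x => p0 x * (u x - ψ x)^2)
        = fun x => (p0 x * (u x)^2 - 2 * (p0 x * u x * ψ x)) + p0 x * (ψ x)^2 := by
      funext x; ring
    have h1 : Integrable (fun x => p0 x * (u x)^2 - 2 * (p0 x * u x * ψ x)) :=
      hA2a.sub (hint2'.const_mul 2)
    rw [this, integral_add h1 hA2b, integral_sub hA2a (hint2'.const_mul 2),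
      integral_const_mul]
  -- split the right-hand integral
  have hrhs : (∫ x, p0 x * ((1/2) * (ψ x)^2 + φ x))
      = (1/2) * (∫ x, p0 x * (ψ x)^2) + (∫ x, p0 x * φ x) := by
    have : (fun x => p0 x * ((1/2) * (ψ x)^2 + φ x))
        = fun x => (1/2) * (p0 x * (ψ x)^2) + p0 x * φ x := by
      funext x; ring
    rw [this, integral_add (hA2b.const_mul (1/2)) hint1, integral_const_mul]
  -- relate the two cross terms
  have hcross : ∫ x, p0 x * u x * ψ x = ∫ x, deriv p0 x * ψ x := by
    refine integral_congr_ae ?_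
    filter_upwards with x
    rw [hp0u x]
  rw [hexp, hrhs, key, hcross]
  ring
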